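/- Let $I = \bigcap_{j=1}^r \langle x_i^{w_{j,i}} : i \in A_j\rangle$ be a monomial ideal without embedded associated primes such that every associated prime has height $2$ (so $|A_j| = 2$ for all $j$). If the set $X_I = \{(k,l) : k < l,\; \exists i \in A_k \cap A_l \text{ with } w_{k,i} \ne w_{l,i}\}$ is non-empty, then $I^{(2)} \not\subset I^2$. -/

import Mathlib

open MvPolynomial Finset
open Pointwise

/-- The monomial `x^a` in `K[x_1,…,x_n]`. -/
noncomputable def mon {K : Type*} [Field K] {n : ℕ} (a : Fin n → ℕ) :
    MvPolynomial (Fin n) K :=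
  MvPolynomial.monomial (Finsupp.equivFunOnFinite.symm a) 1

/-- `α(L)`: the least total degree of a nonzero monomial of `L`. -/
noncomputable def alphaI {K σ : Type*} [Field K] (L : Ideal (MvPolynomial σ K)) : ℕ :=
  sInf {d : ℕ | ∃ m : σ →₀ ℕ, (m.sum fun _ e => e) = d ∧ MvPolynomial.monomial m (1 : K) ∈ L}

/-- The weighted ideal `I_w`, generated by `x^{w(a)}` for monomials `x^a ∈ I`. -/
noncomputable def wIdeal {K : Type*} [Field K] {n : ℕ} (w : Fin n → ℕ)
    (I : Ideal (MvPolynomial (Fin n) K)) : Ideal (MvPolynomial (Fin n) K) :=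
  Ideal.span {f | ∃ a : Fin n → ℕ, mon (K := K) a ∈ I ∧ f = mon (K := K) (fun i => w i * a i)}

/-- The irreducible monomial ideal `⟨x_i^{w i} : i ∈ A⟩`. -/
noncomputable def qIdeal {K : Type*} [Field K] {n : ℕ} (A : Finset (Fin n)) (w : Fin n → ℕ) :
    Ideal (MvPolynomial (Fin n) K) :=
  Ideal.span ((fun i => (X i : MvPolynomial (Fin n) K) ^ w i) '' ↑A)

/-- `I` is a monomial ideal. -/
def IsMonomialIdeal {K : Type*} [Field K] {n : ℕ} (I : Ideal (MvPolynomial (Fin n) K)) : Prop :=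
  ∃ S : Set (Fin n → ℕ), I = Ideal.span ((mon (K := K)) '' S)

/-- The `s`-th symbolic power `I^{(s)} = ⋂_{p ∈ Ass(I)} (I^s R_p ∩ R)`. -/
noncomputable def symbPow {R : Type*} [CommRing R] (I : Ideal R) (s : ℕ) : Ideal R :=
  ⨅ p : {p : Ideal R // p ∈ associatedPrimes R (R ⧸ I)},
    letI : p.1.IsPrime := p.2.isPrime
    Ideal.comap (algebraMap R (Localization.AtPrime p.1))
      (Ideal.map (algebraMap R (Localization.AtPrime p.1)) (I ^ s))

section Aux

variable {K : Type*} [Field K] {n : ℕ}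

lemma monomial_mem_of_le {J : Ideal (MvPolynomial (Fin n) K)} {g e : Fin n →₀ ℕ}
    (h : (MvPolynomial.monomial g (1 : K)) ∈ J) (hle : g ≤ e) :
    (MvPolynomial.monomial e (1 : K)) ∈ J := by
  have h2 : (MvPolynomial.monomial e (1 : K))
      = MvPolynomial.monomial (e - g) (1 : K) * MvPolynomial.monomial g (1 : K) := by
    rw [MvPolynomial.monomial_mul, one_mul, tsub_add_cancel_of_le hle]
  rw [h2]
  exact J.mul_mem_left _ h

lemma single_mem_q {A : Finset (Fin n)} {w : Fin n → ℕ} {p : Fin n} (hp : p ∈ A) :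
    (MvPolynomial.monomial (Finsupp.single p (w p)) (1 : K)) ∈ qIdeal A w := by
  rw [← MvPolynomial.X_pow_eq_monomial]
  exact Ideal.subset_span ⟨p, hp, rfl⟩

lemma sq_single_mem_q {A : Finset (Fin n)} {w : Fin n → ℕ} {p : Fin n} (hp : p ∈ A) :
    (MvPolynomial.monomial (Finsupp.single p (2 * w p)) (1 : K)) ∈ (qIdeal A w) ^ 2 := by
  have h2 : (MvPolynomial.monomial (Finsupp.single p (2 * w p)) (1 : K))
      = MvPolynomial.monomial (Finsupp.single p (w p)) 1
        * MvPolynomial.monomial (Finsupp.single p (w p)) 1 := by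
    rw [MvPolynomial.monomial_mul, one_mul, ← Finsupp.single_add, two_mul]
  rw [h2, sq]
  exact Ideal.mul_mem_mul (single_mem_q hp) (single_mem_q hp)

lemma mixed_mem_q {A : Finset (Fin n)} {w : Fin n → ℕ} {p q : Fin n} (hp : p ∈ A) (hq : q ∈ A) :
    (MvPolynomial.monomial (Finsupp.single p (w p) + Finsupp.single q (w q)) (1 : K))
      ∈ (qIdeal A w) ^ 2 := by
  have h2 : (MvPolynomial.monomial (Finsupp.single p (w p) + Finsupp.single q (w q)) (1 : K))
      = MvPolynomial.monomial (Finsupp.single p (w p)) 1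
        * MvPolynomial.monomial (Finsupp.single q (w q)) 1 := by
    rw [MvPolynomial.monomial_mul, one_mul]
  rw [h2, sq]
  exact Ideal.mul_mem_mul (single_mem_q hp) (single_mem_q hq)

lemma q_covers {A : Finset (Fin n)} {w : Fin n → ℕ} {f : MvPolynomial (Fin n) K}
    (hf : f ∈ qIdeal A w) : ∀ μ ∈ f.support, ∃ p ∈ A, Finsupp.single p (w p) ≤ μ := by
  have hq : qIdeal (K := K) A w
      = Ideal.span ((fun t => MvPolynomial.monomial t (1 : K)) ''
        ((fun p => Finsupp.single p (w p)) '' ↑A)) := by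
    unfold qIdeal
    rw [Set.image_image]
    simp only [MvPolynomial.X_pow_eq_monomial]
  rw [hq, MvPolynomial.mem_ideal_span_monomial_image] at hf
  intro μ hμ
  obtain ⟨s, hs, hle⟩ := hf μ hμ
  obtain ⟨p, hp, rfl⟩ := hs
  exact ⟨p, hp, hle⟩

lemma iInf_q_le_span {r : ℕ} (A : Fin r → Finset (Fin n)) (w : Fin r → Fin n → ℕ) :
    (⨅ j, qIdeal (K := K) (A j) (w j)) ≤
      Ideal.span ((fun t => MvPolynomial.monomial t (1 : K)) ''
        {t | ∀ j, ∃ p ∈ A j, Finsupp.single p (w j p) ≤ t}) := by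
  intro f hf
  rw [MvPolynomial.mem_ideal_span_monomial_image]
  intro μ hμ
  exact ⟨μ, fun j => q_covers (Submodule.mem_iInf _ |>.mp hf j) μ hμ, le_rfl⟩

lemma sq_le_span {I : Ideal (MvPolynomial (Fin n) K)} {S : Set (Fin n →₀ ℕ)}
    (h : I ≤ Ideal.span ((fun t => MvPolynomial.monomial t (1 : K)) '' S)) :
    I ^ 2 ≤ Ideal.span ((fun t => MvPolynomial.monomial t (1 : K)) '' (S + S)) := by
  rw [sq]
  refine le_trans (Ideal.mul_mono h h) ?_
  rw [Ideal.span_mul_span']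
  refine Ideal.span_mono ?_
  rw [Set.mul_subset_iff]
  rintro x ⟨s1, hs1, rfl⟩ y ⟨s2, hs2, rfl⟩
  exact ⟨s1 + s2, Set.add_mem_add hs1 hs2, by rw [MvPolynomial.monomial_mul, one_mul]⟩

lemma pair_other {α : Type*} [DecidableEq α] {s : Finset α} {i : α} (h : s.card = 2)
    (hi : i ∈ s) : ∃ a, a ≠ i ∧ s = {i, a} := by
  obtain ⟨x, y, hxy, rfl⟩ := Finset.card_eq_two.mp h
  rcases Finset.mem_insert.mp hi with rfl | hy
  · exact ⟨y, fun hc => hxy hc.symm, rfl⟩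
  · rw [Finset.mem_singleton] at hy
    subst hy
    exact ⟨x, fun hc => hxy hc, Finset.pair_comm x i⟩

lemma pair_le {p q : Fin n} (hpq : p ≠ q) {vp vq : ℕ} {e : Fin n →₀ ℕ}
    (h1 : vp ≤ e p) (h2 : vq ≤ e q) : Finsupp.single p vp + Finsupp.single q vq ≤ e := by
  rw [Finsupp.le_def]
  intro x
  rw [Finsupp.add_apply]
  rcases eq_or_ne x p with rfl | hxp
  · rw [Finsupp.single_eq_same, Finsupp.single_eq_of_ne' (Ne.symm hpq)]
    omega
  · rcases eq_or_ne x q with rfl | hxq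
    · rw [Finsupp.single_eq_same, Finsupp.single_eq_of_ne' (Ne.symm hxp)]
      omega
    · rw [Finsupp.single_eq_of_ne' (Ne.symm hxp), Finsupp.single_eq_of_ne' (Ne.symm hxq)]
      simp

end Aux
lemma main_aux {K : Type*} [Field K] {n r : ℕ}
    (A : Fin r → Finset (Fin n)) (w : Fin r → Fin n → ℕ)
    (hcard : ∀ j, (A j).card = 2)
    (hwpos : ∀ j, ∀ i ∈ A j, 0 < w j i)
    (hnoemb : ∀ j k, A j ⊆ A k → j = k)
    {k l : Fin r} (hkl : k ≠ l) {i : Fin n} (hik : i ∈ A k) (hil : i ∈ A l)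
    (hlt : w k i < w l i) :
    ¬ (⨅ j, (qIdeal (K := K) (A j) (w j)) ^ 2) ≤
        (⨅ j, qIdeal (K := K) (A j) (w j)) ^ 2 := by
  obtain ⟨a, hai, hAk2⟩ := pair_other (hcard k) hik
  obtain ⟨b, hbi, hAl2⟩ := pair_other (hcard l) hil
  have hak : a ∈ A k := by rw [hAk2]; simp
  have hbl : b ∈ A l := by rw [hAl2]; simp
  have hab : a ≠ b := by
    intro h
    subst h
    exact hkl (hnoemb k l (by rw [hAk2, hAl2]))
  have hs1 : 0 < w k i := hwpos k i hik
  have hu1 : 0 < w l i := hwpos l i hil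
  have hsp : 0 < w k a := hwpos k a hak
  have hup : 0 < w l b := hwpos l b hbl
  obtain ⟨ea, eb, hebl, hgen, hblock⟩ :
      ∃ ea eb : ℕ, w l b ≤ eb ∧
        (∀ j, A j = {a, b} → (w j a ≤ ea ∧ w j b ≤ eb) ∨ 2 * w j b ≤ eb) ∧
        (∀ c1i c1a c1b c2i c2a c2b : ℕ,
          (w k i ≤ c1i ∨ w k a ≤ c1a) → (w l i ≤ c1i ∨ w l b ≤ c1b) →
          (∀ j, A j = {a, b} → w j a ≤ c1a ∨ w j b ≤ c1b) →
          (w k i ≤ c2i ∨ w k a ≤ c2a) → (w l i ≤ c2i ∨ w l b ≤ c2b) →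
          (∀ j, A j = {a, b} → w j a ≤ c2a ∨ w j b ≤ c2b) →
          c1i + c2i ≤ w k i + w l i - 1 → c1a + c2a ≤ ea → c1b + c2b ≤ eb → False) := by
    by_cases hP : ∃ j0, A j0 = {a, b} ∧ w l b ≤ w j0 b
    · obtain ⟨j0, hj0, hj0b⟩ := hP
      have haj0 : a ∈ A j0 := by rw [hj0]; simp
      have hbj0 : b ∈ A j0 := by rw [hj0]; simp
      have hA0 : 0 < w j0 a := hwpos j0 a haj0
      have hB0 : 0 < w j0 b := hwpos j0 b hbj0
      refine ⟨w j0 a, w j0 b, hj0b, ?_, ?_⟩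
      · intro j hj
        have hjj : j = j0 := hnoemb j j0 (by rw [hj, hj0])
        subst hjj
        exact Or.inl ⟨le_rfl, le_rfl⟩
      · intro c1i c1a c1b c2i c2a c2b h1k h1l h1j h2k h2l h2j hi ha hb
        have h1j0 := h1j j0 hj0
        have h2j0 := h2j j0 hj0
        rcases h1k with h | h <;> rcases h1l with h' | h' <;> rcases h1j0 with h'' | h'' <;>
          rcases h2k with g | g <;> rcases h2l with g' | g' <;> rcases h2j0 with g'' | g'' <;>
            omega
    · push_neg at hP
      refine ⟨0, 2 * w l b - 1, by omega, ?_, ?_⟩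
      · intro j hj
        have := hP j hj
        omega
      · intro c1i c1a c1b c2i c2a c2b h1k h1l h1j h2k h2l h2j hi ha hb
        rcases h1k with h | h <;> rcases h1l with h' | h' <;> rcases h2k with g | g <;>
          rcases h2l with g' | g' <;> omega
  set F : Fin n → ℕ := fun p =>
    if p = i then w k i + w l i - 1 else if p = a then ea else if p = b then eb
    else 2 * (Finset.univ.sup fun j => w j p) with hF
  set e : Fin n →₀ ℕ := Finsupp.equivFunOnFinite.symm F with he
  have heval : ∀ p, e p = F p := fun p => rfl
  have hei : e i = w k i + w l i - 1 := by rw [heval]; simp [hF]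
  have hea : e a = ea := by rw [heval]; simp [hF, hai]
  have heb : e b = eb := by rw [heval]; simp [hF, hbi, Ne.symm hab]
  have hmem : ∀ j, (MvPolynomial.monomial e (1 : K)) ∈ (qIdeal (A j) (w j)) ^ 2 := by
    intro j
    by_cases hsub : A j ⊆ {i, a, b}
    · obtain ⟨x, y, hxy, hAj⟩ := Finset.card_eq_two.mp (hcard j)
      have hx : x ∈ ({i, a, b} : Finset (Fin n)) := hsub (by rw [hAj]; simp)
      have hy : y ∈ ({i, a, b} : Finset (Fin n)) := hsub (by rw [hAj]; simp)
      simp only [Finset.mem_insert, Finset.mem_singleton] at hx hy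
      have hcase : A j = {i, a} ∨ A j = {i, b} ∨ A j = {a, b} := by
        rcases hx with rfl | rfl | rfl <;> rcases hy with rfl | rfl | rfl <;>
          first
            | exact absurd rfl hxy
            | exact Or.inl hAj
            | exact Or.inl (hAj.trans (Finset.pair_comm _ _))
            | exact Or.inr (Or.inl hAj)
            | exact Or.inr (Or.inl (hAj.trans (Finset.pair_comm _ _)))
            | exact Or.inr (Or.inr hAj)
            | exact Or.inr (Or.inr (hAj.trans (Finset.pair_comm _ _)))
      rcases hcase with hc | hc | hc
      · have hjk : j = k := hnoemb j k (by rw [hc, hAk2])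
        subst hjk
        refine monomial_mem_of_le (sq_single_mem_q hik) ?_
        rw [Finsupp.single_le_iff, hei]
        omega
      · have hjl : j = l := hnoemb j l (by rw [hc, hAl2])
        subst hjl
        refine monomial_mem_of_le (mixed_mem_q hil hbl) (pair_le (Ne.symm hbi) ?_ ?_)
        · rw [hei]; omega
        · rw [heb]; exact hebl
      · have haj : a ∈ A j := by rw [hc]; simp
        have hbj : b ∈ A j := by rw [hc]; simp
        rcases hgen j hc with ⟨h1, h2⟩ | h1
        · exact monomial_mem_of_le (mixed_mem_q haj hbj)
            (pair_le hab (by rw [hea]; exact h1) (by rw [heb]; exact h2))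
        · refine monomial_mem_of_le (sq_single_mem_q hbj) ?_
          rw [Finsupp.single_le_iff, heb]
          exact h1
    · obtain ⟨p, hpj, hpn⟩ := Finset.not_subset.mp hsub
      refine monomial_mem_of_le (sq_single_mem_q hpj) ?_
      rw [Finsupp.single_le_iff]
      simp only [Finset.mem_insert, Finset.mem_singleton, not_or] at hpn
      have hepv : e p = 2 * (Finset.univ.sup fun j' => w j' p) := by
        rw [heval]; simp [hF, hpn.1, hpn.2.1, hpn.2.2]
      rw [hepv]
      have hws : w j p ≤ Finset.univ.sup fun j' => w j' p := by
        simpa using Finset.le_sup (f := fun j' => w j' p) (Finset.mem_univ j)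
      omega
  intro hcontra
  have hm2 : (MvPolynomial.monomial e (1 : K)) ∈ (⨅ j, qIdeal (K := K) (A j) (w j)) ^ 2 :=
    hcontra ((Submodule.mem_iInf _).mpr hmem)
  have hm3 := sq_le_span (iInf_q_le_span A w) hm2
  rw [MvPolynomial.mem_ideal_span_monomial_image] at hm3
  have hesupp : e ∈ (MvPolynomial.monomial e (1 : K)).support := by
    classical
    rw [MvPolynomial.support_monomial]
    simp
  obtain ⟨s, hs, hsle⟩ := hm3 e hesupp
  rw [Set.mem_add] at hs
  obtain ⟨s1, hs1, s2, hs2, rfl⟩ := hs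
  simp only [Set.mem_setOf_eq] at hs1 hs2
  have hcoord : ∀ x, s1 x + s2 x ≤ e x := by
    intro x
    have hx := Finsupp.le_def.mp hsle x
    rwa [Finsupp.add_apply] at hx
  have get : ∀ s' : Fin n →₀ ℕ, (∀ j, ∃ p ∈ A j, Finsupp.single p (w j p) ≤ s') →
      (w k i ≤ s' i ∨ w k a ≤ s' a) ∧ (w l i ≤ s' i ∨ w l b ≤ s' b) ∧
      (∀ j, A j = {a, b} → w j a ≤ s' a ∨ w j b ≤ s' b) := by
    intro s' hs'
    refine ⟨?_, ?_, ?_⟩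
    · obtain ⟨p, hp, hle⟩ := hs' k
      rw [hAk2, Finset.mem_insert, Finset.mem_singleton] at hp
      rcases hp with rfl | rfl
      · exact Or.inl (Finsupp.single_le_iff.mp hle)
      · exact Or.inr (Finsupp.single_le_iff.mp hle)
    · obtain ⟨p, hp, hle⟩ := hs' l
      rw [hAl2, Finset.mem_insert, Finset.mem_singleton] at hp
      rcases hp with rfl | rfl
      · exact Or.inl (Finsupp.single_le_iff.mp hle)
      · exact Or.inr (Finsupp.single_le_iff.mp hle)
    · intro j hj
      obtain ⟨p, hp, hle⟩ := hs' j
      rw [hj, Finset.mem_insert, Finset.mem_singleton] at hp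
      rcases hp with rfl | rfl
      · exact Or.inl (Finsupp.single_le_iff.mp hle)
      · exact Or.inr (Finsupp.single_le_iff.mp hle)
  obtain ⟨h1k, h1l, h1j⟩ := get s1 hs1
  obtain ⟨h2k, h2l, h2j⟩ := get s2 hs2
  exact hblock (s1 i) (s1 a) (s1 b) (s2 i) (s2 a) (s2 b) h1k h1l h1j h2k h2l h2j
    (hei ▸ hcoord i) (hea ▸ hcoord a) (heb ▸ hcoord b)

theorem symbPow_two_not_le_of_XI_nonempty {K : Type*} [Field K] {n r : ℕ}
    (A : Fin r → Finset (Fin n)) (w : Fin r → Fin n → ℕ)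
    (hcard : ∀ j, (A j).card = 2)
    (hwpos : ∀ j, ∀ i ∈ A j, 0 < w j i)
    (hnoemb : ∀ j k, A j ⊆ A k → j = k)
    (hirr : ∀ j : Fin r,
      ¬ (⨅ k : {k : Fin r // k ≠ j}, qIdeal (K := K) (A k.1) (w k.1)) ≤ qIdeal (A j) (w j))
    (hX : ∃ k l : Fin r, k < l ∧ ∃ i, i ∈ A k ∧ i ∈ A l ∧ w k i ≠ w l i) :
    ¬ (⨅ j, (qIdeal (K := K) (A j) (w j)) ^ 2) ≤
        (⨅ j, qIdeal (K := K) (A j) (w j)) ^ 2 := by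
  obtain ⟨k, l, hkl, i, hik, hil, hne⟩ := hX
  rcases lt_or_gt_of_ne hne with h | h
  · exact main_aux A w hcard hwpos hnoemb hkl.ne hik hil h
  · exact main_aux A w hcard hwpos hnoemb hkl.ne' hil hik h
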